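/- For a single derivation D, the 4-linear alternating map Ψ(a₁,a₂,a₃,a₄) = Σ_{σ∈S₄} sgn(σ) Tr(D(a_{σ(1)})·a_{σ(2)}·a_{σ(3)}·a_{σ(4)}) is a 4-cocycle on the Lie algebra A with bracket [a,b] = ab - ba: for all x₁,…,x₅ ∈ A, Σ_{1 ≤ i < j ≤ 5} (-1)^{i+j} Ψ([x_i,x_j], x₁, …, x̂_i, …, x̂_j, …, x₅) = 0. -/

import Mathlib

/-- `Ψ(a₁,a₂,a₃,a₄) = Σ_{σ∈S₄} sgn(σ) Tr(D(a_{σ(1)})·a_{σ(2)}·a_{σ(3)}·a_{σ(4)})`. -/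
noncomputable def Psi4 {A : Type*} [Ring A] [Algebra ℂ A]
    (Tr : A →ₗ[ℂ] ℂ) (D : A →ₗ[ℂ] A) (a₁ a₂ a₃ a₄ : A) : ℂ :=
  ∑ σ : Equiv.Perm (Fin 4), ((Equiv.Perm.sign σ : ℤ) : ℂ) *
    Tr (D (![a₁, a₂, a₃, a₄] (σ 0)) * ![a₁, a₂, a₃, a₄] (σ 1) *
        ![a₁, a₂, a₃, a₄] (σ 2) * ![a₁, a₂, a₃, a₄] (σ 3))

private lemma perm_sum_succ' {M : Type*} [AddCommMonoid M] {n : ℕ}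
    (f : Equiv.Perm (Fin (n+1)) → M) :
    ∑ σ : Equiv.Perm (Fin (n+1)), f σ
      = ∑ p : Fin (n+1), ∑ e : Equiv.Perm (Fin n), f (Equiv.Perm.decomposeFin.symm (p, e)) := by
  rw [← Equiv.sum_comp Equiv.Perm.decomposeFin.symm f, Fintype.sum_prod_type]

private lemma perm_sum_one' {M : Type*} [AddCommMonoid M] (f : Equiv.Perm (Fin 1) → M) :
    ∑ σ : Equiv.Perm (Fin 1), f σ = f 1 := by simp [Finset.sum_unique_nonempty]

private lemma psi4_expand {A : Type*} [Ring A] [Algebra ℂ A]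
    (Tr : A →ₗ[ℂ] ℂ) (D : A →ₗ[ℂ] A) (a b c d : A) :
    Psi4 Tr D a b c d =
      Tr (D a * (b * (c * d)))
      - Tr (D a * (b * (d * c)))
      - Tr (D a * (c * (b * d)))
      + Tr (D a * (c * (d * b)))
      + Tr (D a * (d * (b * c)))
      - Tr (D a * (d * (c * b)))
      - Tr (D b * (a * (c * d)))
      + Tr (D b * (a * (d * c)))
      + Tr (D b * (c * (a * d)))
      - Tr (D b * (c * (d * a)))
      - Tr (D b * (d * (a * c)))
      + Tr (D b * (d * (c * a)))
      + Tr (D c * (a * (b * d)))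
      - Tr (D c * (a * (d * b)))
      - Tr (D c * (b * (a * d)))
      + Tr (D c * (b * (d * a)))
      + Tr (D c * (d * (a * b)))
      - Tr (D c * (d * (b * a)))
      - Tr (D d * (a * (b * c)))
      + Tr (D d * (a * (c * b)))
      + Tr (D d * (b * (a * c)))
      - Tr (D d * (b * (c * a)))
      - Tr (D d * (c * (a * b)))
      + Tr (D d * (c * (b * a))) := by
  simp only [Psi4, perm_sum_succ', perm_sum_one',
    show (2 : Fin 4) = (1 : Fin 3).succ from rfl,
    show (3 : Fin 4) = (2 : Fin 3).succ from rfl,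
    show (2 : Fin 3) = (1 : Fin 2).succ from rfl,
    Equiv.Perm.decomposeFin.symm_sign, Equiv.Perm.decomposeFin_symm_apply_zero,
    Equiv.Perm.decomposeFin_symm_apply_one, Equiv.Perm.decomposeFin_symm_apply_succ,
    Fin.sum_univ_succ, Finset.univ_unique, Finset.sum_singleton]
  norm_num [Equiv.swap_apply_def, Fin.ext_iff, mul_assoc]
  simp only [show ![a, b, c, d] 2 = c from rfl, show ![b, c, d] 2 = d from rfl]
  ring

set_option maxHeartbeats 4000000 in
theorem stmt_10 {A : Type*} [Ring A] [Algebra ℂ A]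
    (Tr : A →ₗ[ℂ] ℂ) (hTr : ∀ x y : A, Tr (x * y) = Tr (y * x))
    (D : A →ₗ[ℂ] A) (hD : ∀ x y : A, D (x * y) = D x * y + x * D y)
    (hTD : ∀ a : A, Tr (D a) = 0) :
    ∀ x₁ x₂ x₃ x₄ x₅ : A,
      - Psi4 Tr D (x₁ * x₂ - x₂ * x₁) x₃ x₄ x₅
      + Psi4 Tr D (x₁ * x₃ - x₃ * x₁) x₂ x₄ x₅
      - Psi4 Tr D (x₁ * x₄ - x₄ * x₁) x₂ x₃ x₅
      + Psi4 Tr D (x₁ * x₅ - x₅ * x₁) x₂ x₃ x₄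
      - Psi4 Tr D (x₂ * x₃ - x₃ * x₂) x₁ x₄ x₅
      + Psi4 Tr D (x₂ * x₄ - x₄ * x₂) x₁ x₃ x₅
      - Psi4 Tr D (x₂ * x₅ - x₅ * x₂) x₁ x₃ x₄
      - Psi4 Tr D (x₃ * x₄ - x₄ * x₃) x₁ x₂ x₅
      + Psi4 Tr D (x₃ * x₅ - x₅ * x₃) x₁ x₂ x₄
      - Psi4 Tr D (x₄ * x₅ - x₅ * x₄) x₁ x₂ x₃ = 0 := by
  intro x₁ x₂ x₃ x₄ x₅
  have rot : ∀ u v w y z : A, Tr (u*(v*(w*(y*z)))) = Tr (v*(w*(y*(z*u)))) := by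
    intro u v w y z
    rw [hTr]
    simp only [mul_assoc]
  have m1 : ∀ u v w y z : A, Tr (u * (D v * (w * (y * z)))) = Tr (D v * (w * (y * (z * u)))) :=
    fun u v w y z => rot u (D v) w y z
  have m2 : ∀ u v w y z : A, Tr (u * (v * (D w * (y * z)))) = Tr (D w * (y * (z * (u * v)))) := by
    intro u v w y z
    rw [rot, rot]
  have m3 : ∀ u v w y z : A, Tr (u * (v * (w * (D y * z)))) = Tr (D y * (z * (u * (v * w)))) := by
    intro u v w y z
    rw [rot, rot, rot]
  have m4 : ∀ u v w y z : A, Tr (u * (v * (w * (y * D z)))) = Tr (D z * (u * (v * (w * y)))) := by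
    intro u v w y z
    rw [rot, rot, rot, rot]
  have htd5 : ∀ a b c d e : A,
      Tr (D a * (b * (c * (d * e)))) + Tr (D b * (c * (d * (e * a))))
        + Tr (D c * (d * (e * (a * b)))) + Tr (D d * (e * (a * (b * c))))
        + Tr (D e * (a * (b * (c * d)))) = 0 := by
    intro a b c d e
    have h := hTD (a * (b * (c * (d * e))))
    simp only [hD, mul_add, add_mul, map_add, mul_assoc] at h
    simp only [m1, m2, m3, m4] at h
    linear_combination h
  simp only [psi4_expand]
  simp only [map_sub, hD, sub_mul, mul_sub, add_mul, mul_add, map_add, mul_assoc]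
  simp only [m1, m2, m3, m4]
  linear_combination
      - htd5 x₁ x₂ x₃ x₄ x₅
      + htd5 x₁ x₂ x₃ x₅ x₄
      + htd5 x₁ x₂ x₄ x₃ x₅
      - htd5 x₁ x₂ x₄ x₅ x₃
      - htd5 x₁ x₂ x₅ x₃ x₄
      + htd5 x₁ x₂ x₅ x₄ x₃
      + htd5 x₁ x₃ x₂ x₄ x₅
      - htd5 x₁ x₃ x₂ x₅ x₄
      - htd5 x₁ x₃ x₄ x₂ x₅
      + htd5 x₁ x₃ x₄ x₅ x₂
      + htd5 x₁ x₃ x₅ x₂ x₄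
      - htd5 x₁ x₃ x₅ x₄ x₂
      - htd5 x₁ x₄ x₂ x₃ x₅
      + htd5 x₁ x₄ x₂ x₅ x₃
      + htd5 x₁ x₄ x₃ x₂ x₅
      - htd5 x₁ x₄ x₃ x₅ x₂
      - htd5 x₁ x₄ x₅ x₂ x₃
      + htd5 x₁ x₄ x₅ x₃ x₂
      + htd5 x₁ x₅ x₂ x₃ x₄
      - htd5 x₁ x₅ x₂ x₄ x₃
      - htd5 x₁ x₅ x₃ x₂ x₄
      + htd5 x₁ x₅ x₃ x₄ x₂
      + htd5 x₁ x₅ x₄ x₂ x₃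
      - htd5 x₁ x₅ x₄ x₃ x₂
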